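/- Let p be a prime, k ≥ 1 an integer, and f, g ∈ ℤ_p[x] monic polynomials of degree at least 1. Then (f, g) = ℤ_p[x] if and only if the reductions of f and g modulo p^k generate (ℤ/p^kℤ)[x] as an ideal. -/

import Mathlib

open Polynomial

theorem lifting_lemma_pow (p : ℕ) [Fact p.Prime] (k : ℕ) (hk : 1 ≤ k)
    (f g : Polynomial ℤ_[p])
    (hf : f.Monic) (hg : g.Monic) (hdf : 1 ≤ f.natDegree) (hdg : 1 ≤ g.natDegree) :
    Ideal.span {f, g} = (⊤ : Ideal (Polynomial ℤ_[p])) ↔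
      Ideal.span {f.map (PadicInt.toZModPow (p := p) k), g.map (PadicInt.toZModPow (p := p) k)} =
        (⊤ : Ideal (Polynomial (ZMod (p ^ k)))) := by
  set φ : Polynomial ℤ_[p] →+* Polynomial (ZMod (p ^ k)) :=
    Polynomial.mapRingHom (PadicInt.toZModPow (p := p) k) with hφ
  have hmapspan : Ideal.map φ (Ideal.span {f, g}) =
      Ideal.span {f.map (PadicInt.toZModPow (p := p) k),
        g.map (PadicInt.toZModPow (p := p) k)} := by
    rw [Ideal.map_span]
    congr 1
    simp [hφ, Set.image_insert_eq]
  constructor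
  · intro h
    rw [← hmapspan, h, Ideal.map_top]
  · intro h
    -- surjectivity of the reduction map
    have hsurj0 : Function.Surjective (PadicInt.toZModPow (p := p) k) := by
      intro z
      refine ⟨(z.val : ℤ_[p]), ?_⟩
      rw [map_natCast]
      simp [ZMod.natCast_val, ZMod.cast_id]
    have hsurj : Function.Surjective φ := Polynomial.map_surjective _ hsurj0
    -- 1 = a + b with a ∈ I, b ∈ ker φ
    have hcomap := Ideal.comap_map_of_surjective φ hsurj (Ideal.span {f, g})
    rw [hmapspan, h, Ideal.comap_top] at hcomap
    have hker : RingHom.ker φ = Ideal.span {Polynomial.C ((p : ℤ_[p]) ^ k)} := by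
      rw [hφ, Polynomial.ker_mapRingHom, PadicInt.ker_toZModPow, Ideal.map_span]
      simp
    have h1 : (1 : Polynomial ℤ_[p]) ∈ Ideal.span {f, g} ⊔ RingHom.ker φ := by
      rw [RingHom.ker_eq_comap_bot, ← hcomap]; trivial
    obtain ⟨a, ha, b, hb, hab⟩ := Submodule.mem_sup.mp h1
    rw [hker, Ideal.mem_span_singleton] at hb
    obtain ⟨c, hc⟩ := hb
    -- work in the quotient Q
    set I : Ideal (Polynomial ℤ_[p]) := Ideal.span {f, g} with hI
    -- Q is a finite ℤ_[p]-module, being a quotient of AdjoinRoot f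
    have hfle : Ideal.span {f} ≤ I := by
      rw [Ideal.span_le]
      intro x hx
      rw [Set.mem_singleton_iff] at hx
      subst hx
      exact Ideal.subset_span (by simp)
    have hfin : Module.Finite ℤ_[p] (Polynomial ℤ_[p] ⧸ I) := by
      have hfinA : Module.Finite ℤ_[p] (AdjoinRoot f) :=
        Module.Finite.of_basis (AdjoinRoot.powerBasis' hf).basis
      let ψ : AdjoinRoot f →ₐ[ℤ_[p]] Polynomial ℤ_[p] ⧸ I :=
        { Ideal.Quotient.factor (S := Ideal.span {f}) (T := I) hfle with
          commutes' := fun r => rfl }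
      have hψs : Function.Surjective ψ := by
        intro x
        obtain ⟨y, rfl⟩ := Ideal.Quotient.mk_surjective x
        exact ⟨Ideal.Quotient.mk _ y, Ideal.Quotient.factor_mk hfle y⟩
      exact Module.Finite.of_surjective ψ.toLinearMap hψs
    -- Nakayama
    have hQtriv : (⊤ : Submodule ℤ_[p] (Polynomial ℤ_[p] ⧸ I)) = ⊥ := by
      refine Submodule.eq_bot_of_le_smul_of_le_jacobson_bot (IsLocalRing.maximalIdeal ℤ_[p]) ⊤
        hfin.fg_top ?_ (IsLocalRing.maximalIdeal_le_jacobson ⊥)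
      intro x _
      obtain ⟨y, rfl⟩ := Ideal.Quotient.mkₐ_surjective ℤ_[p] I x
      have key2 : y - (p : ℤ_[p]) • (((p : ℤ_[p]) ^ (k - 1)) • (y * c)) ∈ I := by
        have heq : y - (p : ℤ_[p]) • (((p : ℤ_[p]) ^ (k - 1)) • (y * c)) = y * a := by
          rw [smul_smul, ← pow_succ', Nat.sub_add_cancel hk, smul_eq_C_mul]
          have hA : a = 1 - Polynomial.C ((p : ℤ_[p]) ^ k) * c := by
            rw [← hc, eq_sub_iff_add_eq, hab]
          rw [hA]; ring
        rw [heq]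
        exact I.mul_mem_left y ha
      have key : (Ideal.Quotient.mkₐ ℤ_[p] I) y =
          (p : ℤ_[p]) • (Ideal.Quotient.mkₐ ℤ_[p] I) (((p : ℤ_[p]) ^ (k - 1)) • (y * c)) := by
        rw [← map_smul, Ideal.Quotient.mkₐ_eq_mk]
        exact (Ideal.Quotient.eq).mpr key2
      rw [key]
      refine Submodule.smul_mem_smul ?_ trivial
      rw [PadicInt.maximalIdeal_eq_span_p, Ideal.mem_span_singleton]
    -- conclude
    have h1Q : (Ideal.Quotient.mk I (1 : Polynomial ℤ_[p])) = 0 := by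
      have h' : (Ideal.Quotient.mk I 1) ∈ (⊥ : Submodule ℤ_[p] (Polynomial ℤ_[p] ⧸ I)) :=
        hQtriv ▸ Submodule.mem_top
      exact (Submodule.mem_bot _).mp h'
    rw [Ideal.eq_top_iff_one]
    exact (Ideal.Quotient.eq_zero_iff_mem).mp h1Q
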